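/- Let h ∈ SU(2), viewed as a 2×2 complex matrix, and let τ ∈ ℝ be the (real) trace of h, with τ² < 4 (equivalently h ≠ 1 and h ≠ −1). Then the matrix exponential satisfies exp( (2π / √(4 − τ²)) • (h − h⁻¹) ) = 1 (the identity matrix). Consequently the curve t ↦ exp(t (h − h⁻¹)) is periodic with period 2π / √(4 − τ²). -/

import Mathlib

open Matrix

/-- `SU2` is the special unitary group of 2×2 complex matrices,
identified with the 3-sphere `S³`. -/
abbrev SU2 : Submonoid (Matrix (Fin 2) (Fin 2) ℂ) := Matrix.specialUnitaryGroup (Fin 2) ℂ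

noncomputable instance : Group SU2 :=
  { (inferInstance : Monoid SU2) with
    inv := fun A => ⟨star A.1, by
      obtain ⟨hu, hd⟩ := Matrix.mem_specialUnitaryGroup_iff.mp A.2
      refine Matrix.mem_specialUnitaryGroup_iff.mpr ⟨Unitary.star_mem hu, ?_⟩
      rw [Matrix.star_eq_conjTranspose, Matrix.det_conjTranspose, hd, star_one]⟩
    inv_mul_cancel := fun A => Subtype.ext A.2.1.1 }

/-- For `h ∈ SU(2)` with real trace `τ`, `τ² < 4`, the curve `t ↦ exp(t(h − h⁻¹))` is
periodic with period `2π/√(4 − τ²)`. -/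
theorem exp_sub_inv_periodic (h : SU2) (τ : ℝ)
    (htr : ((h : Matrix (Fin 2) (Fin 2) ℂ)).trace = (τ : ℂ)) (hτ : τ ^ 2 < 4) :
    NormedSpace.exp ((2 * Real.pi / Real.sqrt (4 - τ ^ 2)) •
        ((h : Matrix (Fin 2) (Fin 2) ℂ) - ((h⁻¹ : SU2) : Matrix (Fin 2) (Fin 2) ℂ)))
      = 1 ∧
    (∀ t : ℝ,
      NormedSpace.exp ((t + 2 * Real.pi / Real.sqrt (4 - τ ^ 2)) •
          ((h : Matrix (Fin 2) (Fin 2) ℂ) - ((h⁻¹ : SU2) : Matrix (Fin 2) (Fin 2) ℂ)))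
        = NormedSpace.exp (t •
            ((h : Matrix (Fin 2) (Fin 2) ℂ) - ((h⁻¹ : SU2) : Matrix (Fin 2) (Fin 2) ℂ)))) := by
  set M : Matrix (Fin 2) (Fin 2) ℂ := (h : Matrix (Fin 2) (Fin 2) ℂ) with hM
  have hdet : M.det = 1 := h.2.2
  have hstar : ((h⁻¹ : SU2) : Matrix (Fin 2) (Fin 2) ℂ) = star M := rfl
  have hms : M * star M = 1 := h.2.1.2
  have hadjM : M.adjugate * M = 1 := by rw [Matrix.adjugate_mul, hdet, one_smul]
  have hstar_adj : star M = M.adjugate := by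
    calc star M = (M.adjugate * M) * star M := by rw [hadjM, one_mul]
    _ = M.adjugate * (M * star M) := by rw [mul_assoc]
    _ = M.adjugate := by rw [hms, mul_one]
  have hadj_eq : M.adjugate = (τ : ℂ) • 1 - M := by
    rw [Matrix.eta_fin_two M] at htr ⊢
    rw [Matrix.adjugate_fin_two]
    rw [Matrix.trace_fin_two_of] at htr
    ext i j
    fin_cases i <;> fin_cases j <;>
      simp [Matrix.one_apply] <;> linear_combination htr
  set A : Matrix (Fin 2) (Fin 2) ℂ := M - ((h⁻¹ : SU2) : Matrix (Fin 2) (Fin 2) ℂ) with hA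
  have hAeq : A = M - ((τ : ℂ) • 1 - M) := by rw [hA, hstar, hstar_adj, hadj_eq]
  -- M * M = τ • M - 1
  have hMM : M * M = (τ : ℂ) • M - 1 := by
    have := hadjM
    rw [hadj_eq] at this
    have h2 : ((τ : ℂ) • (1 : Matrix (Fin 2) (Fin 2) ℂ)) * M - M * M = 1 := by
      rw [← Matrix.sub_mul, this]
    rw [Matrix.smul_mul, one_mul] at h2
    rw [eq_sub_iff_add_eq, ← h2]
    abel
  have hA2 : A * A = (((τ : ℝ) ^ 2 - 4 : ℝ) : ℂ) • (1 : Matrix (Fin 2) (Fin 2) ℂ) := by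
    rw [hAeq]
    have : M - ((τ : ℂ) • 1 - M) = (2 : ℂ) • M - (τ : ℂ) • 1 := by
      ext i j
      simp [Matrix.sub_apply, Matrix.smul_apply]
      ring
    rw [this]
    ext i j
    simp only [Matrix.sub_mul, Matrix.mul_sub, Matrix.smul_mul, Matrix.mul_smul, hMM,
      one_mul, mul_one, smul_smul, smul_sub, Matrix.sub_apply, Matrix.smul_apply,
      Matrix.one_apply, smul_eq_mul]
    push_cast
    ring
  set ω : ℝ := Real.sqrt (4 - τ ^ 2) with hω
  have hω2 : ω ^ 2 = 4 - τ ^ 2 := Real.sq_sqrt (by linarith)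
  have hωpos : 0 < ω := Real.sqrt_pos.mpr (by linarith)
  set J : Matrix (Fin 2) (Fin 2) ℂ := ω⁻¹ • A with hJ
  have hJ2 : J * J = -1 := by
    rw [hJ, smul_mul_smul_comm, hA2, ← smul_assoc]
    have hcast : (ω⁻¹ * ω⁻¹) • (((τ : ℝ) ^ 2 - 4 : ℝ) : ℂ)
        = ((ω⁻¹ * ω⁻¹ * (τ ^ 2 - 4) : ℝ) : ℂ) := by
      rw [Complex.real_smul]; push_cast; ring
    rw [hcast]
    have : ω⁻¹ * ω⁻¹ * (τ ^ 2 - 4) = -1 := by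
      field_simp
      nlinarith [hω2]
    rw [this]
    push_cast
    ext i j
    simp only [Matrix.smul_apply, Matrix.neg_apply, Matrix.one_apply, smul_eq_mul]
    split_ifs <;> simp
  -- the ℝ-algebra hom ℂ → M₂(ℂ) sending I to J
  letI : SeminormedRing (Matrix (Fin 2) (Fin 2) ℂ) := Matrix.linftyOpSemiNormedRing
  letI : NormedRing (Matrix (Fin 2) (Fin 2) ℂ) := Matrix.linftyOpNormedRing
  letI : NormedAlgebra ℝ (Matrix (Fin 2) (Fin 2) ℂ) := Matrix.linftyOpNormedAlgebra
  set φ : ℂ →ₐ[ℝ] Matrix (Fin 2) (Fin 2) ℂ := Complex.liftAux J hJ2 with hφ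
  have hφcont : Continuous φ := φ.toLinearMap.continuous_of_finiteDimensional
  have key : ∀ s : ℝ, s • J = φ (s * Complex.I) := by
    intro s
    rw [hφ, Complex.liftAux_apply]
    simp [Complex.mul_re, Complex.mul_im]
  have hTA : ∀ s : ℝ, (s / ω) • A = s • J := by
    intro s
    rw [hJ, smul_smul, div_eq_mul_inv]
  have hexp1 : NormedSpace.exp ((2 * Real.pi / ω) • A) = 1 := by
    rw [hTA, key]
    erw [← NormedSpace.map_exp φ hφcont]
    have : NormedSpace.exp ((2 * Real.pi : ℝ) * Complex.I : ℂ) = 1 := by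
      rw [← Complex.exp_eq_exp_ℂ]
      push_cast
      rw [Complex.exp_two_pi_mul_I]
    rw [this]
    exact _root_.map_one φ
  refine ⟨hexp1, fun t => ?_⟩
  rw [add_smul, Matrix.exp_add_of_commute _ _
      (((Commute.refl A).smul_left _).smul_right _),
    hexp1, mul_one]
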